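/- Let ρ be the canonical two-qubit state with parameters mx, my, mz, m'x, m'y, m'z, Cxx, Cyy, Czz, assumed positive semidefinite, and assume Re(trace ρ₊) ≠ 0 and Re(trace ρ₋) ≠ 0. Then for every z, u : ℝ, the probability that Bob obtains the outcome Π(z,u) satisfies P₊(Π(z,u)) − P₋(Π(z,u)) = −2·(7·sin α − sin(3α))·(my·m'x·cos u·sin z + sin u·sin z·(my·m'y − Cyy) + my·m'z·cos z) / ((−3 + cos(2α))² − 16·my²·sin²α). -/

import Mathlib

open Matrix Kronecker Complex
open scoped ComplexOrder

noncomputable section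

/-- Pauli matrix `σx`. -/
def σx : Matrix (Fin 2) (Fin 2) ℂ := !![0, 1; 1, 0]

/-- Pauli matrix `σy`. -/
def σy : Matrix (Fin 2) (Fin 2) ℂ := !![0, -Complex.I; Complex.I, 0]

/-- Pauli matrix `σz`. -/
def σz : Matrix (Fin 2) (Fin 2) ℂ := !![1, 0; 0, -1]

/-- The simulated PT-symmetric evolution operator at the chosen time. -/
def Upt (α : ℝ) : Matrix (Fin 2) (Fin 2) ℂ :=
  !![(Real.sin α : ℂ), -Complex.I; -Complex.I, -(Real.sin α : ℂ)]

/-- Alice's operation `A₊` (do nothing). -/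
def Apos : Matrix (Fin 2) (Fin 2) ℂ := 1

/-- Alice's operation `A₋` (bit flip `σx`). -/
def Aneg : Matrix (Fin 2) (Fin 2) ℂ := σx

/-- Unnormalized post-selected state after Alice applies `A₊` followed by the
simulated PT evolution. -/
def postPlus (α : ℝ) (ρ : Matrix (Fin 2 × Fin 2) (Fin 2 × Fin 2) ℂ) :
    Matrix (Fin 2 × Fin 2) (Fin 2 × Fin 2) ℂ :=
  ((Upt α * Apos) ⊗ₖ (1 : Matrix (Fin 2) (Fin 2) ℂ)) * ρ *
    ((Upt α * Apos) ⊗ₖ (1 : Matrix (Fin 2) (Fin 2) ℂ))ᴴ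

/-- Unnormalized post-selected state after Alice applies `A₋` followed by the
simulated PT evolution. -/
def postMinus (α : ℝ) (ρ : Matrix (Fin 2 × Fin 2) (Fin 2 × Fin 2) ℂ) :
    Matrix (Fin 2 × Fin 2) (Fin 2 × Fin 2) ℂ :=
  ((Upt α * Aneg) ⊗ₖ (1 : Matrix (Fin 2) (Fin 2) ℂ)) * ρ *
    ((Upt α * Aneg) ⊗ₖ (1 : Matrix (Fin 2) (Fin 2) ℂ))ᴴ

/-- Probability that Bob obtains outcome `Π` given Alice applied `A₊`. -/
def Pplus (α : ℝ) (ρ : Matrix (Fin 2 × Fin 2) (Fin 2 × Fin 2) ℂ)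
    (Pi : Matrix (Fin 2) (Fin 2) ℂ) : ℝ :=
  ((((1 : Matrix (Fin 2) (Fin 2) ℂ) ⊗ₖ Pi) * postPlus α ρ).trace).re /
    ((postPlus α ρ).trace).re

/-- Probability that Bob obtains outcome `Π` given Alice applied `A₋`. -/
def Pminus (α : ℝ) (ρ : Matrix (Fin 2 × Fin 2) (Fin 2 × Fin 2) ℂ)
    (Pi : Matrix (Fin 2) (Fin 2) ℂ) : ℝ :=
  ((((1 : Matrix (Fin 2) (Fin 2) ℂ) ⊗ₖ Pi) * postMinus α ρ).trace).re /
    ((postMinus α ρ).trace).re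

/-- Bob's `σy`-measurement projector onto `|+_y⟩ = (|0⟩ + i|1⟩)/√2`. -/
def Piy : Matrix (Fin 2) (Fin 2) ℂ :=
  (1/2 : ℂ) • !![1, -Complex.I; Complex.I, 1]

/-- Bob's rank-one projector `Π(z,u)` for an arbitrary projective measurement. -/
def Pizu (z u : ℝ) : Matrix (Fin 2) (Fin 2) ℂ :=
  !![((Real.cos (z/2))^2 : ℂ),
     (Real.cos (z/2) : ℂ) * (Real.sin (z/2) : ℂ) * Complex.exp (-(Complex.I * u));
     (Real.cos (z/2) : ℂ) * (Real.sin (z/2) : ℂ) * Complex.exp (Complex.I * u),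
     ((Real.sin (z/2))^2 : ℂ)]

/-- The single-qubit state `|+⟩ = (|0⟩ + |1⟩)/√2`. -/
def ketPlus : Fin 2 → ℂ := ![((1 / Real.sqrt 2 : ℝ) : ℂ), ((1 / Real.sqrt 2 : ℝ) : ℂ)]

/-- The single-qubit state `|−⟩ = (|0⟩ − |1⟩)/√2`. -/
def ketMinus : Fin 2 → ℂ := ![((1 / Real.sqrt 2 : ℝ) : ℂ), ((-(1 / Real.sqrt 2) : ℝ) : ℂ)]

/-- The (normalized) pure state `|ψ_{β,γ}⟩ = (β|++⟩ + γ|−−⟩)/√(β²+γ²)`. -/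
def ψpure (β γ : ℝ) : Fin 2 × Fin 2 → ℂ := fun q =>
  ((β : ℂ) * (ketPlus q.1 * ketPlus q.2) + (γ : ℂ) * (ketMinus q.1 * ketMinus q.2)) /
    ((Real.sqrt (β^2 + γ^2) : ℝ) : ℂ)

/-- The pure two-qubit density matrix `ρ_{β,γ} = |ψ_{β,γ}⟩⟨ψ_{β,γ}|`. -/
def ρpure (β γ : ℝ) : Matrix (Fin 2 × Fin 2) (Fin 2 × Fin 2) ℂ :=
  Matrix.vecMulVec (ψpure β γ) (fun q => starRingEnd ℂ (ψpure β γ q))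

/-- The maximally entangled state `|ψ⁺⟩ = (|00⟩ + |11⟩)/√2`. -/
def ψmax : Fin 2 × Fin 2 → ℂ := fun q =>
  if q.1 = q.2 then ((1 / Real.sqrt 2 : ℝ) : ℂ) else 0

/-- The two-qubit Werner state `ρ_W(p) = p |ψ⁺⟩⟨ψ⁺| + ((1-p)/4) 1`. -/
def ρWerner (p : ℝ) : Matrix (Fin 2 × Fin 2) (Fin 2 × Fin 2) ℂ :=
  (p : ℂ) • Matrix.vecMulVec ψmax (fun q => starRingEnd ℂ (ψmax q)) +
    (((1 - p) / 4 : ℝ) : ℂ) • 1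

/-- The canonical two-qubit state with magnetizations `mx my mz` (Alice),
`nx ny nz` (Bob) and diagonal correlators `Cxx Cyy Czz`. -/
def ρcan (mx my mz nx ny nz Cxx Cyy Czz : ℝ) :
    Matrix (Fin 2 × Fin 2) (Fin 2 × Fin 2) ℂ :=
  (1/4 : ℂ) • ((1 : Matrix (Fin 2 × Fin 2) (Fin 2 × Fin 2) ℂ)
    + (mx : ℂ) • (σx ⊗ₖ (1 : Matrix (Fin 2) (Fin 2) ℂ))
    + (my : ℂ) • (σy ⊗ₖ (1 : Matrix (Fin 2) (Fin 2) ℂ))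
    + (mz : ℂ) • (σz ⊗ₖ (1 : Matrix (Fin 2) (Fin 2) ℂ))
    + (nx : ℂ) • ((1 : Matrix (Fin 2) (Fin 2) ℂ) ⊗ₖ σx)
    + (ny : ℂ) • ((1 : Matrix (Fin 2) (Fin 2) ℂ) ⊗ₖ σy)
    + (nz : ℂ) • ((1 : Matrix (Fin 2) (Fin 2) ℂ) ⊗ₖ σz)
    + (Cxx : ℂ) • (σx ⊗ₖ σx)
    + (Cyy : ℂ) • (σy ⊗ₖ σy)
    + (Czz : ℂ) • (σz ⊗ₖ σz))

/-- Bob's reduced matrix: the partial trace over Alice's subsystem. -/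

lemma tracePlus_re (α mx my mz nx ny nz Cxx Cyy Czz : ℝ) :
    ((postPlus α (ρcan mx my mz nx ny nz Cxx Cyy Czz)).trace).re
      = 1 + 2 * Real.sin α * my + Real.sin α ^ 2 := by
  simp only [postPlus, ρcan, Apos, σx, σy, σz, Upt, Matrix.trace,
    Matrix.diag, Matrix.mul_apply, Matrix.conjTranspose_apply,
    Matrix.kroneckerMap_apply, Matrix.smul_apply, Matrix.add_apply,
    Matrix.one_apply, Fintype.sum_prod_type, Fin.sum_univ_two,
    Matrix.cons_val', Matrix.cons_val_zero, Matrix.cons_val_one,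
    Matrix.head_cons, Matrix.head_fin_const, Matrix.empty_val',
    Matrix.cons_val_fin_one, mul_one, mul_zero, one_mul, zero_mul,
    Prod.mk.injEq, if_true, if_false, smul_eq_mul]
  norm_num [Complex.ext_iff, Complex.sin_ofReal_re]
  ring

lemma traceMinus_re (α mx my mz nx ny nz Cxx Cyy Czz : ℝ) :
    ((postMinus α (ρcan mx my mz nx ny nz Cxx Cyy Czz)).trace).re
      = 1 - 2 * Real.sin α * my + Real.sin α ^ 2 := by
  simp only [postMinus, ρcan, Aneg, σx, σy, σz, Upt, Matrix.trace,
    Matrix.diag, Matrix.mul_apply, Matrix.conjTranspose_apply,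
    Matrix.kroneckerMap_apply, Matrix.smul_apply, Matrix.add_apply,
    Matrix.one_apply, Fintype.sum_prod_type, Fin.sum_univ_two,
    Matrix.cons_val', Matrix.cons_val_zero, Matrix.cons_val_one,
    Matrix.head_cons, Matrix.head_fin_const, Matrix.empty_val',
    Matrix.cons_val_fin_one, mul_one, mul_zero, one_mul, zero_mul,
    Prod.mk.injEq, if_true, if_false, smul_eq_mul]
  norm_num [Complex.ext_iff, Complex.sin_ofReal_re]
  ring

lemma expI (u : ℝ) : Complex.exp (Complex.I * u)
    = (Real.cos u : ℂ) + (Real.sin u : ℂ) * Complex.I := by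
  rw [mul_comm, Complex.exp_mul_I, Complex.ofReal_cos, Complex.ofReal_sin]

lemma expnI (u : ℝ) : Complex.exp (-(Complex.I * u))
    = (Real.cos u : ℂ) - (Real.sin u : ℂ) * Complex.I := by
  have : -(Complex.I * (u:ℂ)) = ((-u : ℝ):ℂ) * Complex.I := by push_cast; ring
  rw [this, Complex.exp_mul_I, ← Complex.ofReal_cos, ← Complex.ofReal_sin,
    Real.cos_neg, Real.sin_neg]
  push_cast; ring

def PiGen (c d cu su : ℝ) : Matrix (Fin 2) (Fin 2) ℂ :=
  !![((c:ℂ))^2, (c:ℂ)*(d:ℂ)*((cu:ℂ) - (su:ℂ)*Complex.I);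
     (c:ℂ)*(d:ℂ)*((cu:ℂ) + (su:ℂ)*Complex.I), ((d:ℂ))^2]

lemma Pizu_eq (z u : ℝ) :
    Pizu z u = PiGen (Real.cos (z/2)) (Real.sin (z/2)) (Real.cos u) (Real.sin u) := by
  ext i j
  fin_cases i <;> fin_cases j <;>
    simp [Pizu, PiGen, expI, expnI]

lemma numPlus_re (α mx my mz nx ny nz Cxx Cyy Czz c d cu su : ℝ) :
    ((((1 : Matrix (Fin 2) (Fin 2) ℂ) ⊗ₖ PiGen c d cu su) *
        postPlus α (ρcan mx my mz nx ny nz Cxx Cyy Czz)).trace).re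
      = (1 + Real.sin α ^ 2) *
          ((c^2 + d^2) / 2 + nz * (c^2 - d^2) / 2
            + (nx * cu + ny * su) * c * d)
        + 2 * Real.sin α * Cyy * c * d * su
        + Real.sin α * my * (c^2 + d^2) := by
  simp only [postPlus, ρcan, Apos, PiGen, σx, σy, σz, Upt, Matrix.trace,
    Matrix.diag, Matrix.mul_apply, Matrix.conjTranspose_apply,
    Matrix.kroneckerMap_apply, Matrix.smul_apply, Matrix.add_apply,
    Matrix.one_apply, Fintype.sum_prod_type, Fin.sum_univ_two,
    Matrix.cons_val', Matrix.cons_val_zero, Matrix.cons_val_one,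
    Matrix.head_cons, Matrix.head_fin_const, Matrix.empty_val',
    Matrix.cons_val_fin_one, mul_one, mul_zero, one_mul, zero_mul,
    Prod.mk.injEq, if_true, if_false, smul_eq_mul]
  norm_num [Complex.ext_iff, Complex.sin_ofReal_re, Complex.cos_ofReal_re, ← Complex.ofReal_pow]
  ring

lemma numMinus_re (α mx my mz nx ny nz Cxx Cyy Czz c d cu su : ℝ) :
    ((((1 : Matrix (Fin 2) (Fin 2) ℂ) ⊗ₖ PiGen c d cu su) *
        postMinus α (ρcan mx my mz nx ny nz Cxx Cyy Czz)).trace).re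
      = (1 + Real.sin α ^ 2) *
          ((c^2 + d^2) / 2 + nz * (c^2 - d^2) / 2
            + (nx * cu + ny * su) * c * d)
        - 2 * Real.sin α * Cyy * c * d * su
        - Real.sin α * my * (c^2 + d^2) := by
  simp only [postMinus, ρcan, Aneg, PiGen, σx, σy, σz, Upt, Matrix.trace,
    Matrix.diag, Matrix.mul_apply, Matrix.conjTranspose_apply,
    Matrix.kroneckerMap_apply, Matrix.smul_apply, Matrix.add_apply,
    Matrix.one_apply, Fintype.sum_prod_type, Fin.sum_univ_two,
    Matrix.cons_val', Matrix.cons_val_zero, Matrix.cons_val_one,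
    Matrix.head_cons, Matrix.head_fin_const, Matrix.empty_val',
    Matrix.cons_val_fin_one, mul_one, mul_zero, one_mul, zero_mul,
    Prod.mk.injEq, if_true, if_false, smul_eq_mul]
  norm_num [Complex.ext_iff, Complex.sin_ofReal_re, Complex.cos_ofReal_re, ← Complex.ofReal_pow]
  ring

def ptraceA (X : Matrix (Fin 2 × Fin 2) (Fin 2 × Fin 2) ℂ) :
    Matrix (Fin 2) (Fin 2) ℂ :=
  Matrix.of fun i j => ∑ k : Fin 2, X (k, i) (k, j)

/-- The positive semidefinite square root of a positive semidefinite matrix (the definition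
`Matrix.PosSemidef.sqrt` of the older Mathlib, no longer present). -/
def Matrix.PosSemidef.sqrt {n : Type*} [Fintype n] [DecidableEq n] {A : Matrix n n ℂ}
    (hA : A.PosSemidef) : Matrix n n ℂ :=
  hA.1.eigenvectorUnitary.1 * diagonal ((↑) ∘ (Real.sqrt ·) ∘ hA.1.eigenvalues) *
    (star hA.1.eigenvectorUnitary : Matrix n n ℂ)

/-- The trace distance `T(A,B) = (1/2) tr √((A-B)ᴴ (A-B))`, where the square
root is the positive semidefinite square root. -/
def traceDist (A B : Matrix (Fin 2) (Fin 2) ℂ) : ℝ :=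
  (1/2) * (((Matrix.posSemidef_conjTranspose_mul_self (A - B)).sqrt).trace).re

/-- For the canonical two-qubit state and arbitrary rank-one projective
measurements `Π(z,u)` by Bob, the signaling difference is
`P₊(Π(z,u)) − P₋(Π(z,u)) = −2(7 sin α − sin 3α)(my m'x cos u sin z +
sin u sin z (my m'y − Cyy) + my m'z cos z) / ((−3 + cos 2α)² − 16 my² sin²α)`. -/
theorem stmt7 (α mx my mz nx ny nz Cxx Cyy Czz : ℝ)
    (ρ : Matrix (Fin 2 × Fin 2) (Fin 2 × Fin 2) ℂ)
    (hρ : ρ = ρcan mx my mz nx ny nz Cxx Cyy Czz)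
    (hpsd : ρ.PosSemidef)
    (hplus : ((postPlus α ρ).trace).re ≠ 0)
    (hminus : ((postMinus α ρ).trace).re ≠ 0) :
    ∀ z u : ℝ,
      Pplus α ρ (Pizu z u) - Pminus α ρ (Pizu z u) =
        -2 * (7 * Real.sin α - Real.sin (3*α)) *
          (my * nx * Real.cos u * Real.sin z +
            Real.sin u * Real.sin z * (my * ny - Cyy) +
            my * nz * Real.cos z) /
          ((-3 + Real.cos (2*α))^2 - 16 * my^2 * (Real.sin α)^2) := by
  subst hρ
  intro z u
  have hP := tracePlus_re α mx my mz nx ny nz Cxx Cyy Czz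
  have hM := traceMinus_re α mx my mz nx ny nz Cxx Cyy Czz
  rw [hP] at hplus
  rw [hM] at hminus
  have hsz : Real.sin z = 2 * Real.sin (z/2) * Real.cos (z/2) := by
    have h := Real.sin_two_mul (z/2)
    rw [show 2*(z/2) = z by ring] at h
    linarith
  have hcz : Real.cos z = Real.cos (z/2)^2 - Real.sin (z/2)^2 := by
    have h := Real.cos_two_mul' (z/2)
    rw [show 2*(z/2) = z by ring] at h
    linarith
  have hD : ((-3 + Real.cos (2*α))^2 - 16 * my^2 * Real.sin α^2) ≠ 0 := by
    have he : ((-3 + Real.cos (2*α))^2 - 16 * my^2 * Real.sin α^2)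
        = 4 * (1 + 2 * Real.sin α * my + Real.sin α ^ 2)
            * (1 - 2 * Real.sin α * my + Real.sin α ^ 2) := by
      rw [Real.cos_two_mul']
      have := Real.sin_sq_add_cos_sq α
      nlinarith [Real.sin_sq_add_cos_sq α]
    rw [he]
    positivity
  rw [Pplus, Pminus, Pizu_eq, hP, hM,
    numPlus_re α mx my mz nx ny nz Cxx Cyy Czz _ _ _ _,
    numMinus_re α mx my mz nx ny nz Cxx Cyy Czz _ _ _ _,
    Real.sin_three_mul, hsz, hcz, Real.cos_two_mul']
  rw [Real.cos_two_mul'] at hD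
  have hc : Real.cos α ^ 2 = 1 - Real.sin α ^ 2 := by
    nlinarith [Real.sin_sq_add_cos_sq α]
  rw [hc] at hD ⊢
  rw [div_sub_div _ _ hplus hminus, div_eq_div_iff (mul_ne_zero hplus hminus) hD]
  ring
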